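/- If x majorizes y in ℝⁿ, then f(x) ≥ f(y) for every permutation-invariant norm f on ℝⁿ. -/

import Mathlib

open Finset

/-- The `i`-th largest entry (0-indexed) of the tuple `x`. -/
noncomputable def sortedDesc (n : ℕ) (x : Fin n → ℝ) : Fin n → ℝ :=
  fun i => x (Tuple.sort x i.rev)

/-- Sum of the `k` largest entries of `x`. -/
noncomputable def topSum (n : ℕ) (x : Fin n → ℝ) (k : ℕ) : ℝ :=
  ∑ i ∈ Finset.univ.filter (fun i : Fin n => (i : ℕ) < k), sortedDesc n x i

/-- `u` majorizes `x`. -/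
def Majorizes (n : ℕ) (u x : Fin n → ℝ) : Prop :=
  (∀ k, k < n → topSum n x k ≤ topSum n u k) ∧ (∑ i, x i = ∑ i, u i)

/-- `u` weakly submajorizes `x`. -/
def WeakSubmajorizes (n : ℕ) (u x : Fin n → ℝ) : Prop :=
  ∀ k, k ≤ n → topSum n x k ≤ topSum n u k

/-- Number of nonzero components. -/
noncomputable def suppCard (n : ℕ) (x : Fin n → ℝ) : ℕ :=
  (Finset.univ.filter (fun i => x i ≠ 0)).card

/-- the permutation realizing sortedDesc -/
noncomputable def sdPerm (n : ℕ) (x : Fin n → ℝ) : Equiv.Perm (Fin n) :=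
  (Fin.revPerm).trans (Tuple.sort x)

lemma sortedDesc_eq (n : ℕ) (x : Fin n → ℝ) (i : Fin n) :
    sortedDesc n x i = x (sdPerm n x i) := rfl

lemma sortedDesc_antitone (n : ℕ) (x : Fin n → ℝ) : Antitone (sortedDesc n x) := by
  intro i j hij
  exact Tuple.monotone_sort x (Fin.rev_le_rev.mpr hij)

noncomputable def sdExt (n : ℕ) (x : Fin n → ℝ) : ℕ → ℝ :=
  fun i => if h : i < n then sortedDesc n x ⟨i, h⟩ else 0

lemma sdExt_coe (n : ℕ) (x : Fin n → ℝ) (i : Fin n) : sdExt n x i = sortedDesc n x i := by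
  simp [sdExt, i.isLt]

lemma topSum_eq_range (n : ℕ) (x : Fin n → ℝ) (k : ℕ) (hk : k ≤ n) :
    topSum n x k = ∑ i ∈ Finset.range k, sdExt n x i := by
  rw [topSum, Finset.sum_filter]
  have h1 : ∀ i : Fin n, (if (i : ℕ) < k then sortedDesc n x i else 0)
      = (fun m => if m < k then sdExt n x m else 0) (i : ℕ) := by
    intro i; simp [sdExt_coe]
  rw [Finset.sum_congr rfl (fun i _ => h1 i),
    Fin.sum_univ_eq_sum_range (fun m => if m < k then sdExt n x m else 0) n, ← Finset.sum_filter]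
  congr 1
  ext i
  simp only [Finset.mem_filter, Finset.mem_range]
  omega

lemma topSum_total (n : ℕ) (x : Fin n → ℝ) : topSum n x n = ∑ i, x i := by
  rw [topSum, Finset.filter_true_of_mem (fun i _ => i.isLt)]
  calc ∑ i, sortedDesc n x i = ∑ i, x (sdPerm n x i) := rfl
    _ = ∑ i, x i := Equiv.sum_comp _ x

lemma abel_le (n : ℕ) (d gy gx : ℕ → ℝ)
    (hd : ∀ i, i + 1 < n → d (i + 1) ≤ d i)
    (hle : ∀ k, k < n → ∑ i ∈ range k, gy i ≤ ∑ i ∈ range k, gx i)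
    (heq : ∑ i ∈ range n, gy i = ∑ i ∈ range n, gx i) :
    ∑ i ∈ range n, d i * gy i ≤ ∑ i ∈ range n, d i * gx i := by
  have hy := Finset.sum_range_by_parts d gy n
  have hx := Finset.sum_range_by_parts d gx n
  simp only [smul_eq_mul] at hy hx
  rw [hy, hx, heq]
  have hterm : ∀ i ∈ range (n - 1),
      (d (i + 1) - d i) * ∑ j ∈ range (i + 1), gx j ≤
      (d (i + 1) - d i) * ∑ j ∈ range (i + 1), gy j := by
    intro i hi
    rw [Finset.mem_range] at hi
    have h1 : i + 1 < n := by omega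
    exact mul_le_mul_of_nonpos_left (hle _ h1) (by linarith [hd i h1])
  linarith [Finset.sum_le_sum hterm]

lemma key_ineq (n : ℕ) (x y : Fin n → ℝ) (hxy : Majorizes n x y) (c : Fin n → ℝ) :
    ∃ σ : Equiv.Perm (Fin n), ∑ i, c i * y i ≤ ∑ i, c i * (x ∘ σ) i := by
  set ec := sdPerm n c
  set ey := sdPerm n y
  set ex := sdPerm n x
  refine ⟨ec.symm.trans ex, ?_⟩
  have stepA : ∑ i, c i * y i = ∑ i, sortedDesc n c i * y (ec i) :=
    (Equiv.sum_comp ec (fun i => c i * y i)).symm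
  have stepE : ∑ i, c i * (x ∘ (ec.symm.trans ex)) i
      = ∑ i, sortedDesc n c i * sortedDesc n x i := by
    rw [← Equiv.sum_comp ec (fun i => c i * (x ∘ (ec.symm.trans ex)) i)]
    simp [sortedDesc_eq]
    rfl
  rw [stepA, stepE]
  -- rearrangement: y (ec i) = sortedDesc y ((ec.trans ey.symm) i)
  have hre : ∀ i, y (ec i) = sortedDesc n y ((ec.trans ey.symm) i) := by
    intro i; simp [sortedDesc_eq]
    exact congrArg y (Equiv.apply_symm_apply ey (ec i)).symm
  calc ∑ i, sortedDesc n c i * y (ec i)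
      = ∑ i, sortedDesc n c i * sortedDesc n y ((ec.trans ey.symm) i) := by
        simp_rw [hre]
    _ ≤ ∑ i, sortedDesc n c i * sortedDesc n y i :=
        ((sortedDesc_antitone n c).monovary (sortedDesc_antitone n y)).sum_mul_comp_perm_le_sum_mul
    _ ≤ ∑ i, sortedDesc n c i * sortedDesc n x i := by
        have trans : ∀ z : Fin n → ℝ, ∑ i, sortedDesc n c i * sortedDesc n z i
            = ∑ i ∈ range n, sdExt n c i * sdExt n z i := by
          intro z
          rw [← Fin.sum_univ_eq_sum_range (fun m => sdExt n c m * sdExt n z m) n]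
          exact Finset.sum_congr rfl (fun i _ => by rw [sdExt_coe, sdExt_coe])
        rw [trans y, trans x]
        refine abel_le n (sdExt n c) (sdExt n y) (sdExt n x) ?_ ?_ ?_
        · intro i hi
          have h1 : i < n := by omega
          rw [sdExt, sdExt, dif_pos hi, dif_pos h1]
          exact sortedDesc_antitone n c (Fin.mk_le_mk.mpr (Nat.le_succ i))
        · intro k hk
          rw [← topSum_eq_range n y k (le_of_lt hk), ← topSum_eq_range n x k (le_of_lt hk)]
          exact hxy.1 k hk
        · rw [← topSum_eq_range n y n le_rfl, ← topSum_eq_range n x n le_rfl,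
            topSum_total, topSum_total]
          exact hxy.2

theorem majorizes_norm_le (n : ℕ) (f : (Fin n → ℝ) → ℝ)
    (hadd : ∀ a b, f (a + b) ≤ f a + f b)
    (hsmul : ∀ (c : ℝ) (a : Fin n → ℝ), f (c • a) = |c| * f a)
    (hdef : ∀ a, f a = 0 → a = 0)
    (hperm : ∀ (σ : Equiv.Perm (Fin n)) (a : Fin n → ℝ), f (a ∘ σ) = f a)
    (x y : Fin n → ℝ) (hxy : Majorizes n x y) :
    f y ≤ f x := by
  set S : Set (Fin n → ℝ) := Set.range (fun σ : Equiv.Perm (Fin n) => x ∘ σ) with hS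
  have hSfin : S.Finite := Set.finite_range _
  have hmem : y ∈ convexHull ℝ S := by
    by_contra hy
    obtain ⟨c, u, hc1, hc2⟩ := geometric_hahn_banach_closed_point
      (convex_convexHull ℝ S) (hSfin.isClosed_convexHull (𝕜 := ℝ)) hy
    set cf : Fin n → ℝ := fun i => c (fun j => if i = j then 1 else 0) with hcf
    have hrep : ∀ v : Fin n → ℝ, c v = ∑ i, cf i * v i := by
      intro v
      have := (c : (Fin n → ℝ) →ₗ[ℝ] ℝ).pi_apply_eq_sum_univ v
      simpa [smul_eq_mul, hcf, mul_comm] using this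
    obtain ⟨σ, hσ⟩ := key_ineq n x y hxy cf
    have h1 : c y ≤ c (x ∘ σ) := by
      rw [hrep, hrep]; exact hσ
    have h2 : c (x ∘ σ) < u := hc1 _ (subset_convexHull ℝ S ⟨σ, rfl⟩)
    linarith
  have hconv : Convex ℝ {z : Fin n → ℝ | f z ≤ f x} := by
    intro u hu v hv a b ha hb hab
    simp only [Set.mem_setOf_eq] at hu hv ⊢
    calc f (a • u + b • v) ≤ f (a • u) + f (b • v) := hadd _ _
      _ = |a| * f u + |b| * f v := by rw [hsmul, hsmul]
      _ = a * f u + b * f v := by rw [abs_of_nonneg ha, abs_of_nonneg hb]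
      _ ≤ a * f x + b * f x := by
          have := mul_le_mul_of_nonneg_left hu ha
          have := mul_le_mul_of_nonneg_left hv hb
          linarith
      _ = f x := by rw [← add_mul, hab, one_mul]
  have hsub : S ⊆ {z : Fin n → ℝ | f z ≤ f x} := by
    rintro z ⟨σ, rfl⟩
    simp only [Set.mem_setOf_eq]
    exact le_of_eq (hperm σ x)
  exact convexHull_min hsub hconv hmem
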